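/- In the tridiagonal setting, for all a, b ∈ ℂ and every n ∈ ℕ, the function z ↦ a zⁿ + b z^{n+1} belongs to H and ‖a zⁿ + b z^{n+1}‖²_H ≤ C/|μ_n|², where M := max(|a|, |b|) and C := M²·(1 + (r+1)²/(1 − R²)). -/

import Mathlib

open Metric Filter

/-- The coefficient sequence used to expand `a z^n + b z^{n+1}` in the basis `e_{n+k}`. -/
noncomputable def tridiagCoeff (μ ν : ℕ → ℂ) (a b : ℂ) (n : ℕ) : ℕ → ℂ
  | 0 => a / μ n
  | (k+1) => ((if k = 0 then b else 0) - tridiagCoeff μ ν a b n k * ν (n+k)) / μ (n+k+1)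

/-- Tridiagonal setting: `H` is an analytic reproducing kernel Hilbert space of
complex-valued functions on the unit disc in which `e_n(z) = μ_n zⁿ + ν_n z^{n+1}` is an
orthonormal basis, `r ≥ sup |μ_n/μ_{n+1}|` and `R ≥ sup |ν_n/μ_{n+1}|` with `R < 1`.
Then for all `a, b ∈ ℂ` and `n ∈ ℕ` the function `z ↦ a zⁿ + b z^{n+1}` belongs to `H`
and its squared norm is at most `C/|μ_n|²`, where `M = max(|a|,|b|)` and
`C = M²(1 + (r+1)²/(1-R²))`. -/
theorem stmt12 {H : Type*}
    [NormedAddCommGroup H] [InnerProductSpace ℂ H] [CompleteSpace H]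
    (ι : H →ₗ[ℂ] (ℂ → ℂ))
    (hinj : ∀ f g : H, Set.EqOn (ι f) (ι g) (ball (0 : ℂ) 1) → f = g)
    (hanal : ∀ f : H, DifferentiableOn ℂ (ι f) (ball (0 : ℂ) 1))
    (heval : ∀ w ∈ ball (0 : ℂ) 1, Continuous fun f : H => ι f w)
    (μ ν : ℕ → ℂ) (hμ : ∀ n, μ n ≠ 0) (hν : ∀ n, ν n ≠ 0)
    (r R : ℝ)
    (hr : ∀ n, ‖μ n / μ (n + 1)‖ ≤ r)
    (hR : ∀ n, ‖ν n / μ (n + 1)‖ ≤ R)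
    (hR1 : R < 1)
    (e : ℕ → H)
    (he : ∀ n, ∀ w ∈ ball (0 : ℂ) 1, ι (e n) w = μ n * w ^ n + ν n * w ^ (n + 1))
    (hON : Orthonormal ℂ e)
    (htotal : Dense ((Submodule.span ℂ (Set.range e) : Submodule ℂ H) : Set H)) :
    ∀ (a b : ℂ) (n : ℕ), ∃ g : H,
      (∀ w ∈ ball (0 : ℂ) 1, ι g w = a * w ^ n + b * w ^ (n + 1)) ∧
      ‖g‖ ^ 2 ≤ (max ‖a‖ ‖b‖) ^ 2 *
        (1 + (r + 1) ^ 2 / (1 - R ^ 2)) / ‖μ n‖ ^ 2 := by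
  intro a b n
  set M : ℝ := max ‖a‖ ‖b‖ with hM
  have hM0 : 0 ≤ M := le_trans (norm_nonneg a) (le_max_left _ _)
  have hr0 : 0 ≤ r := le_trans (norm_nonneg _) (hr 0)
  have hR0 : 0 ≤ R := le_trans (norm_nonneg _) (hR 0)
  have hRsq : R ^ 2 < 1 := by nlinarith
  have hRsq' : 0 < 1 - R ^ 2 := by linarith
  set c : ℕ → ℂ := tridiagCoeff μ ν a b n with hc
  have habsμ : ∀ m, 0 < ‖μ m‖ := fun m => norm_pos_iff.mpr (hμ m)
  have hrm : ∀ m, ‖μ m‖ ≤ r * ‖μ (m+1)‖ := by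
    intro m
    have h := hr m
    rw [norm_div] at h
    rw [← div_le_iff₀ (habsμ (m+1))]
    exact h
  have hRm : ∀ m, ‖ν m‖ ≤ R * ‖μ (m+1)‖ := by
    intro m
    have h := hR m
    rw [norm_div] at h
    rw [← div_le_iff₀ (habsμ (m+1))]
    exact h
  -- the recursion
  have hrec : ∀ k, c (k+1) * μ (n+k+1) = (if k = 0 then b else 0) - c k * ν (n+k) := by
    intro k
    show (((if k = 0 then b else 0) - c k * ν (n+k)) / μ (n+k+1)) * μ (n+k+1) = _
    exact div_mul_cancel₀ _ (hμ (n+k+1))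
  have hc0μ : c 0 * μ n = a := div_mul_cancel₀ a (hμ n)
  -- coefficient bounds
  set A : ℝ := M / ‖μ n‖ with hA
  set D : ℝ := M * (r+1) / ‖μ n‖ with hD
  have hc0 : ‖c 0‖ ≤ A := by
    show ‖a / μ n‖ ≤ A
    rw [norm_div, hA]
    gcongr
    exact le_max_left _ _
  have hck : ∀ k, ‖c (k+1)‖ ≤ R ^ k * D := by
    intro k
    induction k with
    | zero =>
      have hμn1 : (0:ℝ) < ‖μ (n+1)‖ := habsμ (n+1)
      have hμn : (0:ℝ) < ‖μ n‖ := habsμ n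
      have h1 : ‖c 1‖ * ‖μ (n+1)‖ = ‖b - c 0 * ν n‖ := by
        rw [← norm_mul]
        congr 1
        simpa using hrec 0
      have h2 : ‖b - c 0 * ν n‖ ≤ M + A * (R * ‖μ (n+1)‖) := by
        calc ‖b - c 0 * ν n‖
            ≤ ‖b‖ + ‖c 0‖ * ‖ν n‖ := by
              rw [← norm_mul]
              exact norm_sub_le _ _
          _ ≤ M + A * (R * ‖μ (n+1)‖) :=
              add_le_add (le_max_right _ _)
                (mul_le_mul hc0 (hRm n) (norm_nonneg _)
                  (div_nonneg hM0 (habsμ n).le))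
      have key : ‖c 1‖ * ‖μ (n+1)‖ ≤
          M + M / ‖μ n‖ * (R * ‖μ (n+1)‖) := by
        rw [h1]
        exact h2
      have key2 : ‖c 1‖ * ‖μ (n+1)‖ * ‖μ n‖ ≤
          (M + M / ‖μ n‖ * (R * ‖μ (n+1)‖)) * ‖μ n‖ :=
        mul_le_mul_of_nonneg_right key hμn.le
      have hdiv : M / ‖μ n‖ * ‖μ n‖ = M :=
        div_mul_cancel₀ M hμn.ne'
      have key3 : ‖c 1‖ * ‖μ (n+1)‖ * ‖μ n‖ ≤
          M * ‖μ n‖ + M * R * ‖μ (n+1)‖ := by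
        have hring : (M + M / ‖μ n‖ * (R * ‖μ (n+1)‖)) *
            ‖μ n‖ =
            M * ‖μ n‖ +
              M / ‖μ n‖ * ‖μ n‖ * (R * ‖μ (n+1)‖) := by
          ring
        rw [hring, hdiv] at key2
        linarith [key2]
      have hx : (0:ℝ) ≤ ‖c 1‖ := norm_nonneg _
      rw [pow_zero, one_mul, hD, le_div_iff₀ hμn]
      nlinarith [key3, mul_le_mul_of_nonneg_left (hrm n) hM0,
        mul_nonneg (mul_nonneg hM0 (sub_nonneg.2 hR1.le)) hμn1.le, hμn1]
    | succ k ih =>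
      have hD0 : 0 ≤ D := by
        rw [hD]
        have : (0:ℝ) ≤ M * (r + 1) := by nlinarith
        exact div_nonneg this (habsμ n).le
      have h1 : c (k+2) * μ (n+k+2) = - (c (k+1) * ν (n+k+1)) := by
        have h := hrec (k+1)
        simp only [Nat.succ_ne_zero, if_false, zero_sub] at h
        calc c (k+2) * μ (n+k+2) = c (k+1+1) * μ (n+(k+1)+1) := by ring_nf
          _ = - (c (k+1) * ν (n+(k+1))) := h
          _ = - (c (k+1) * ν (n+k+1)) := by ring_nf
      have h2 : ‖c (k+2)‖ * ‖μ (n+k+2)‖ =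
          ‖c (k+1)‖ * ‖ν (n+k+1)‖ := by
        rw [← norm_mul, h1]
        rw [show ‖-(c (k+1) * ν (n+k+1))‖ = ‖c (k+1) * ν (n+k+1)‖
          from norm_neg _, norm_mul]
      have h3 : ‖c (k+1)‖ * ‖ν (n+k+1)‖ ≤
          ‖c (k+1)‖ * (R * ‖μ (n+k+2)‖) :=
        mul_le_mul_of_nonneg_left (hRm (n+k+1)) (norm_nonneg _)
      have hμ2 : (0:ℝ) < ‖μ (n+k+2)‖ := habsμ (n+k+2)
      have hstep : ‖c (k+2)‖ ≤ R * ‖c (k+1)‖ := by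
        rw [← mul_le_mul_iff_left₀ hμ2]
        calc ‖c (k+2)‖ * ‖μ (n+k+2)‖
            = ‖c (k+1)‖ * ‖ν (n+k+1)‖ := h2
          _ ≤ ‖c (k+1)‖ * (R * ‖μ (n+k+2)‖) := h3
          _ = R * ‖c (k+1)‖ * ‖μ (n+k+2)‖ := by ring
      calc ‖c (k+2)‖ ≤ R * ‖c (k+1)‖ := hstep
        _ ≤ R * (R ^ k * D) := by gcongr
        _ = R ^ (k+1) * D := by ring
  -- summability of squared coefficients
  set B : ℝ := M ^ 2 * (1 + (r + 1) ^ 2 / (1 - R ^ 2)) / ‖μ n‖ ^ 2 with hB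
  have hBsum : A ^ 2 + D ^ 2 * (1 - R ^ 2)⁻¹ = B := by
    have hp : ‖μ n‖ ≠ 0 := (habsμ n).ne'
    have hq : (1 - R ^ 2) ≠ 0 := hRsq'.ne'
    rw [hA, hD, hB]
    field_simp
  set u : ℕ → ℝ := fun k => Nat.casesOn k (A ^ 2) (fun j => D ^ 2 * (R ^ 2) ^ j) with hu
  have husum : Summable u := by
    rw [← summable_nat_add_iff 1]
    exact (summable_geometric_of_lt_one (by positivity) hRsq).mul_left (D ^ 2)
  have hutsum : ∑' k, u k = B := by
    rw [Summable.tsum_eq_zero_add husum]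
    have h : ∑' k : ℕ, u (k + 1) = D ^ 2 * (1 - R ^ 2)⁻¹ := by
      rw [show (fun k : ℕ => u (k+1)) = fun k : ℕ => D ^ 2 * (R ^ 2) ^ k from rfl,
        tsum_mul_left, tsum_geometric_of_lt_one (by positivity) hRsq]
    rw [h]
    exact hBsum
  have hle : ∀ k, ‖c k‖ ^ 2 ≤ u k := by
    intro k
    cases k with
    | zero =>
      show ‖c 0‖ ^ 2 ≤ A ^ 2
      exact pow_le_pow_left₀ (norm_nonneg _) hc0 2
    | succ k =>
      show ‖c (k+1)‖ ^ 2 ≤ D ^ 2 * (R ^ 2) ^ k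
      calc ‖c (k+1)‖ ^ 2 ≤ (R ^ k * D) ^ 2 :=
            pow_le_pow_left₀ (norm_nonneg _) (hck k) 2
        _ = D ^ 2 * (R ^ 2) ^ k := by ring
  have hsq : Summable fun k => ‖c k‖ ^ 2 :=
    Summable.of_nonneg_of_le (fun k => sq_nonneg _) hle husum
  -- the orthonormal subfamily
  have hinjadd : Function.Injective (fun k : ℕ => n + k) := fun x y h => by simpa using h
  have hON' : Orthonormal ℂ (fun k : ℕ => e (n + k)) := hON.comp _ hinjadd
  have hOF := hON'.orthogonalFamily
  have happ : ∀ k (x : ℂ),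
      (LinearIsometry.toSpanSingleton ℂ H (hON'.1 k)) x = x • e (n+k) := fun k x => rfl
  have hsummable : Summable fun k => c k • e (n + k) := by
    have h := (hOF.summable_iff_norm_sq_summable c).2 hsq
    exact h.congr (fun k => happ k (c k))
  set g : H := ∑' k, c k • e (n + k) with hg
  have hgsum : HasSum (fun k => c k • e (n + k)) g := hsummable.hasSum
  refine ⟨g, ?_, ?_⟩
  · -- evaluation
    have key : ∀ w ∈ ball (0 : ℂ) 1,
        Tendsto (fun K => c K * ν (n+K) * w ^ (n+K+1)) atTop
          (nhds (ι g w - (a * w ^ n + b * w ^ (n+1)))) := by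
      intro w hw
      set φ : H →L[ℂ] ℂ := { toLinearMap := (LinearMap.proj w).comp ι, cont := heval w hw }
        with hφ
      have hφapp : ∀ f : H, φ f = ι f w := fun f => rfl
      have hsum2 : HasSum (fun k => c k * ι (e (n+k)) w) (ι g w) := by
        have h := hgsum.mapL φ
        simpa only [hφapp, map_smul, Pi.smul_apply, smul_eq_mul] using h
      have hTen : Tendsto (fun K => ∑ k ∈ Finset.range K, c k * ι (e (n+k)) w)
          atTop (nhds (ι g w)) := hsum2.tendsto_sum_nat
      have hwe : ∀ k, ι (e (n+k)) w = μ (n+k) * w ^ (n+k) + ν (n+k) * w ^ (n+k+1) :=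
        fun k => he (n+k) w hw
      have PS : ∀ K, (∑ k ∈ Finset.range (K+1), c k * ι (e (n+k)) w) =
          a * w ^ n + (if K = 0 then (0:ℂ) else b * w ^ (n+1))
            + c K * ν (n+K) * w ^ (n+K+1) := by
        intro K
        induction K with
        | zero =>
          rw [Finset.sum_range_one, hwe 0]
          norm_num
          linear_combination (w ^ n) * hc0μ
        | succ K ih =>
          rw [Finset.sum_range_succ, ih, hwe (K+1)]
          simp only [show n+(K+1) = n+K+1 from rfl, show n+(K+1)+1 = n+K+1+1 from rfl]
          have hr2 := hrec K
          by_cases hK : K = 0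
          · subst hK
            norm_num at hr2 ⊢
            linear_combination (w ^ (n+1)) * hr2
          · rw [if_neg hK] at hr2
            rw [if_neg hK, if_neg (Nat.succ_ne_zero K)]
            linear_combination (w ^ (n+K+1)) * hr2
      have hTen' : Tendsto (fun K => ∑ k ∈ Finset.range (K+1), c k * ι (e (n+k)) w)
          atTop (nhds (ι g w)) := hTen.comp (tendsto_add_atTop_nat 1)
      have hTen2 : Tendsto (fun K => a * w ^ n + (if K = 0 then (0:ℂ) else b * w ^ (n+1))
          + c K * ν (n+K) * w ^ (n+K+1)) atTop (nhds (ι g w)) := hTen'.congr PS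
      have hTen3 : Tendsto (fun K => (a * w ^ n + b * w ^ (n+1))
          + c K * ν (n+K) * w ^ (n+K+1)) atTop (nhds (ι g w)) := by
        refine hTen2.congr' ?_
        filter_upwards [eventually_ge_atTop 1] with K hK
        rw [if_neg (by omega)]
      have hfin := hTen3.sub_const (a * w ^ n + b * w ^ (n+1))
      refine hfin.congr fun K => ?_
      ring
    intro w hw
    have h0 : ι g w - (a * w ^ n + b * w ^ (n+1)) = 0 := by
      rcases eq_or_ne w 0 with hw0 | hw0
      · subst hw0
        have h1 := key 0 hw
        have h2 : Tendsto (fun K : ℕ => c K * ν (n+K) * (0:ℂ) ^ (n+K+1)) atTop (nhds 0) := by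
          have hz : (fun K : ℕ => c K * ν (n+K) * (0:ℂ) ^ (n+K+1)) = fun _ => 0 := by
            funext K
            rw [zero_pow (Nat.succ_ne_zero _), mul_zero]
          rw [hz]
          exact tendsto_const_nhds
        exact tendsto_nhds_unique h1 h2
      · by_contra hne
        set L : ℂ := ι g w - (a * w ^ n + b * w ^ (n+1)) with hL
        have hs0 : 0 < ‖w‖ := norm_pos_iff.mpr hw0
        have hs1 : ‖w‖ < 1 := by
          rw [mem_ball, dist_zero_right] at hw
          exact hw
        set s : ℝ := ‖w‖ with hsdef
        set t : ℝ := (1 + s) / (2 * s) with ht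
        have ht1 : 1 < t := by
          rw [ht, lt_div_iff₀ (by positivity)]
          nlinarith
        have ht0 : (0:ℝ) < t := by linarith
        set w' : ℂ := (t : ℂ) * w with hw'def
        have hw' : w' ∈ ball (0 : ℂ) 1 := by
          rw [mem_ball, dist_zero_right, hw'def, norm_mul, Complex.norm_real,
            Real.norm_eq_abs, abs_of_pos ht0]
          show t * ‖w‖ < 1
          have hns : ‖w‖ = s := rfl
          rw [hns, ht, div_mul_eq_mul_div]
          rw [div_lt_iff₀ (by positivity)]
          nlinarith
        have h1 := key w hw
        have h2 := key w' hw'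
        have habs1 : Tendsto (fun K => ‖c K * ν (n+K) * w ^ (n+K+1)‖)
            atTop (nhds (‖L‖)) := (continuous_norm.tendsto L).comp h1
        have hLpos : 0 < ‖L‖ := norm_pos_iff.mpr hne
        have hpow : Tendsto (fun K : ℕ => t ^ (n+K+1)) atTop atTop := by
          have h3 := (tendsto_pow_atTop_atTop_of_one_lt ht1).comp
            (tendsto_add_atTop_nat (n+1))
          refine h3.congr fun K => ?_
          simp only [Function.comp_apply]
          congr 1
          omega
        have hmul := Filter.Tendsto.pos_mul_atTop hLpos habs1 hpow
        have heq : (fun K => ‖c K * ν (n+K) * w ^ (n+K+1)‖ * t ^ (n+K+1)) =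
            fun K => ‖c K * ν (n+K) * w' ^ (n+K+1)‖ := by
          funext K
          simp only [hw'def, mul_pow, norm_mul, norm_pow, Complex.norm_real, Real.norm_eq_abs, abs_of_pos ht0]
          ring
        rw [heq] at hmul
        have habs2 : Tendsto (fun K => ‖c K * ν (n+K) * w' ^ (n+K+1)‖)
            atTop (nhds (‖ι g w' - (a * w' ^ n + b * w' ^ (n+1))‖)) :=
          (continuous_norm.tendsto _).comp h2
        exact not_tendsto_nhds_of_tendsto_atTop hmul _ habs2
    exact sub_eq_zero.mp h0
  · -- norm bound
    have hfin : ∀ s : Finset ℕ, (∑ k ∈ s, ‖c k‖ ^ 2) ≤ B := by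
      intro s
      calc (∑ k ∈ s, ‖c k‖ ^ 2) ≤ ∑' k, ‖c k‖ ^ 2 :=
            Summable.sum_le_tsum s (fun k _ => sq_nonneg _) hsq
        _ ≤ ∑' k, u k := Summable.tsum_le_tsum hle hsq husum
        _ = B := hutsum
    have hnorm : Tendsto (fun s : Finset ℕ => ‖∑ k ∈ s, c k • e (n+k)‖ ^ 2)
        atTop (nhds (‖g‖ ^ 2)) := by
      have hcont : Continuous fun x : H => ‖x‖ ^ 2 := (continuous_norm.pow 2)
      exact (hcont.tendsto g).comp hgsum
    have hbound : ∀ s : Finset ℕ, ‖∑ k ∈ s, c k • e (n+k)‖ ^ 2 ≤ B := by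
      intro s
      have h1 : ‖∑ k ∈ s, c k • e (n+k)‖ ^ 2 = ∑ k ∈ s, ‖c k‖ ^ 2 := by
        have h := hOF.norm_sum c s
        rw [show (∑ k ∈ s, c k • e (n+k)) =
          ∑ k ∈ s, (LinearIsometry.toSpanSingleton ℂ H (hON'.1 k)) (c k) from
          Finset.sum_congr rfl fun k _ => (happ k (c k)).symm]
        exact h
      rw [h1]
      exact hfin s
    exact le_of_tendsto hnorm (Filter.Eventually.of_forall hbound)
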